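/- There exists an absolute constant C > 0 such that the following holds. Let q be a prime power, let A be a multiplicative subgroup of F_q^* with |A| ≥ q^{2/3}, and let σ : F_q → ℝ be defined by σ(x) = q/|A| if x ∈ A and σ(x) = 0 otherwise. Then for all functions f, g : F_q → [−1, 1], |q^{−2} Σ_{x,y ∈ F_q} f(x)·g(y)·σ(x−y) − q^{−2} Σ_{x,y ∈ F_q} f(x)·g(y)| ≤ C·q^{1/2}/|A|. -/

import Mathlib

open Finset Complex

theorem stmt_10 :
    ∃ C : ℝ, 0 < C ∧
      ∀ (F : Type) [Field F] [Fintype F],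
        ∀ A : Subgroup Fˣ,
          (Fintype.card F : ℝ) ^ ((2 : ℝ) / 3) ≤ (Nat.card A : ℝ) →
          ∀ σ : F → ℝ,
            (∀ x : F, (∃ u ∈ A, (u : F) = x) →
              σ x = (Fintype.card F : ℝ) / (Nat.card A : ℝ)) →
            (∀ x : F, (¬∃ u ∈ A, (u : F) = x) → σ x = 0) →
            ∀ f g : F → ℝ,
              (∀ x, f x ∈ Set.Icc (-1 : ℝ) 1) →
              (∀ x, g x ∈ Set.Icc (-1 : ℝ) 1) →
              |(∑ x : F, ∑ y : F, f x * g y * σ (x - y)) / (Fintype.card F : ℝ) ^ 2 -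
                  (∑ x : F, ∑ y : F, f x * g y) / (Fintype.card F : ℝ) ^ 2| ≤
                C * (Fintype.card F : ℝ) ^ ((1 : ℝ) / 2) / (Nat.card A : ℝ) := by
  refine ⟨1, one_pos, ?_⟩
  intro F _ _ A _hA σ hσ1 hσ0 f g hf hg
  classical
  set q : ℕ := Fintype.card F with hqdef
  set n : ℕ := Nat.card A with hndef
  have hq0 : 0 < (q : ℝ) := by positivity
  haveI : Fintype A := Fintype.ofFinite A
  have hn0' : 0 < n := Nat.card_pos
  have hn0 : 0 < (n : ℝ) := by exact_mod_cast hn0'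
  -- the image of A in F
  set T : Finset F := Finset.univ.image (fun u : A => ((u : Fˣ) : F)) with hTdef
  have hmemT : ∀ x : F, x ∈ T ↔ ∃ u ∈ A, (u : F) = x := by
    intro x
    simp only [hTdef, mem_image, mem_univ, true_and]
    constructor
    · rintro ⟨u, rfl⟩; exact ⟨u, u.2, rfl⟩
    · rintro ⟨u, hu, rfl⟩; exact ⟨⟨u, hu⟩, rfl⟩
  have hTcard : T.card = n := by
    rw [hTdef, Finset.card_image_of_injective _
      (fun u v huv => Subtype.ext (Units.ext huv)), Finset.card_univ,
      hndef, Nat.card_eq_fintype_card]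
  have hσ : ∀ x, σ x = if x ∈ T then (q : ℝ) / n else 0 := by
    intro x
    by_cases hx : x ∈ T
    · rw [if_pos hx]; exact hσ1 x ((hmemT x).1 hx)
    · rw [if_neg hx]; exact hσ0 x (fun h => hx ((hmemT x).2 h))
  have hT0 : ∀ a ∈ T, a ≠ 0 := by
    intro a ha
    obtain ⟨u, _, rfl⟩ := (hmemT a).1 ha
    exact Units.ne_zero u
  have hTmul : ∀ a ∈ T, ∀ b ∈ T, a * b ∈ T := by
    intro a ha b hb
    obtain ⟨u, hu, rfl⟩ := (hmemT a).1 ha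
    obtain ⟨v, hv, rfl⟩ := (hmemT b).1 hb
    exact (hmemT _).2 ⟨u * v, mul_mem hu hv, rfl⟩
  have hTimg : ∀ a ∈ T, T.image (fun b => a * b) = T := by
    intro a ha
    apply Finset.eq_of_subset_of_card_le
    · intro c hc
      obtain ⟨b, hb, rfl⟩ := Finset.mem_image.1 hc
      exact hTmul a ha b hb
    · rw [Finset.card_image_of_injective _ (mul_right_injective₀ (hT0 a ha))]
  -- additive character setup
  set ψ : AddChar F ℂ := AddChar.FiniteField.primitiveChar_to_Complex F with hψdef
  have hψprim := AddChar.FiniteField.primitiveChar_to_Complex_isPrimitive F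
  have O : ∀ b : F, ∑ t : F, ψ (t * b) = if b = 0 then (q : ℂ) else 0 := by
    intro b
    rw [AddChar.sum_mulShift b hψprim]
    split_ifs <;> simp [hqdef]
  have hconj : ∀ a : F, (starRingEnd ℂ) (ψ a) = ψ (-a) := by
    intro a
    have hR : 0 < ringChar F := Nat.pos_of_ne_zero (CharP.ringChar_ne_zero_of_finite F)
    rw [hψdef, AddChar.starComp_apply hR, AddChar.inv_apply]
  -- the deviation function
  set hh : F → ℝ := fun u => σ u - 1 with hhdef
  set D : ℝ := ∑ x : F, ∑ y : F, f x * g y * hh (x - y) with hDdef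
  -- reduce goal to |D| ≤ √q * q^2 / n
  have hgoal : (∑ x : F, ∑ y : F, f x * g y * σ (x - y)) / (q : ℝ) ^ 2 -
      (∑ x : F, ∑ y : F, f x * g y) / (q : ℝ) ^ 2 = D / (q : ℝ) ^ 2 := by
    rw [div_sub_div_same]
    congr 1
    rw [hDdef, ← Finset.sum_sub_distrib]
    refine Finset.sum_congr rfl fun x _ => ?_
    rw [← Finset.sum_sub_distrib]
    refine Finset.sum_congr rfl fun y _ => ?_
    rw [hhdef]; ring
  -- Fourier transforms
  set Fc : F → ℂ := fun t => ∑ x : F, (f x : ℂ) * ψ (t * x) with hFcdef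
  set Gc : F → ℂ := fun t => ∑ y : F, (g y : ℂ) * ψ (-(t * y)) with hGcdef
  set Hc : F → ℂ := fun t => ∑ u : F, (hh u : ℂ) * ψ (-(t * u)) with hHcdef
  -- main identity
  have hmain : (∑ t : F, Fc t * Gc t * Hc t) = (q : ℂ) * (D : ℂ) := by
    have e1 : ∀ t : F, Fc t * Gc t * Hc t
        = ∑ x : F, ∑ y : F, ∑ u : F, ((f x * g y * hh u : ℝ) : ℂ) * ψ ((x - y - u) * t) := by
      intro t
      rw [hFcdef, hGcdef, hHcdef]
      rw [Finset.sum_mul_sum, Finset.sum_mul]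
      refine Finset.sum_congr rfl fun x _ => ?_
      rw [Finset.sum_mul]
      refine Finset.sum_congr rfl fun y _ => ?_
      rw [Finset.mul_sum]
      refine Finset.sum_congr rfl fun u _ => ?_
      have harg : ψ (t * x) * ψ (-(t * y)) * ψ (-(t * u)) = ψ ((x - y - u) * t) := by
        rw [← AddChar.map_add_eq_mul, ← AddChar.map_add_eq_mul]
        congr 1
        ring
      push_cast
      rw [← harg]
      ring
    calc ∑ t : F, Fc t * Gc t * Hc t
        = ∑ t : F, ∑ x : F, ∑ y : F, ∑ u : F,
            ((f x * g y * hh u : ℝ) : ℂ) * ψ ((x - y - u) * t) :=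
          Finset.sum_congr rfl fun t _ => e1 t
      _ = ∑ x : F, ∑ y : F, ∑ u : F, ∑ t : F,
            ((f x * g y * hh u : ℝ) : ℂ) * ψ ((x - y - u) * t) := by
          rw [Finset.sum_comm]
          refine Finset.sum_congr rfl fun x _ => ?_
          rw [Finset.sum_comm]
          refine Finset.sum_congr rfl fun y _ => ?_
          rw [Finset.sum_comm]
      _ = ∑ x : F, ∑ y : F, ∑ u : F,
            ((f x * g y * hh u : ℝ) : ℂ) * (if x - y - u = 0 then (q : ℂ) else 0) := by
          refine Finset.sum_congr rfl fun x _ => Finset.sum_congr rfl fun y _ =>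
            Finset.sum_congr rfl fun u _ => ?_
          rw [← Finset.mul_sum]
          congr 1
          have : ∀ t : F, ψ ((x - y - u) * t) = ψ (t * (x - y - u)) := by
            intro t; rw [mul_comm]
          rw [Finset.sum_congr rfl fun t _ => this t, O]
      _ = (q : ℂ) * (D : ℂ) := by
          rw [hDdef]
          push_cast
          rw [Finset.mul_sum]
          refine Finset.sum_congr rfl fun x _ => ?_
          rw [Finset.mul_sum]
          refine Finset.sum_congr rfl fun y _ => ?_
          rw [Finset.sum_eq_single (x - y)]
          · rw [if_pos (by ring)]; push_cast; ring
          · intro u _ hu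
            rw [if_neg (by intro h; exact hu (by linear_combination -h)), mul_zero]
          · intro h; exact absurd (Finset.mem_univ _) h
  -- the subgroup character sum and its bound
  set SS : F → ℂ := fun s => ∑ a ∈ T, ψ (s * a) with hSSdef
  have hParsevalS : ∑ s : F, Complex.normSq (SS s) = (q : ℝ) * n := by
    have hc : ((∑ s : F, Complex.normSq (SS s) : ℝ) : ℂ) = ((q : ℝ) * n : ℂ) := by
      push_cast
      calc (∑ s : F, (Complex.normSq (SS s) : ℂ))
          = ∑ s : F, SS s * (starRingEnd ℂ) (SS s) := by
            refine Finset.sum_congr rfl fun s _ => (Complex.mul_conj _).symm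
        _ = ∑ s : F, ∑ a ∈ T, ∑ b ∈ T, ψ ((a - b) * s) := by
            refine Finset.sum_congr rfl fun s _ => ?_
            rw [hSSdef, map_sum, Finset.sum_mul_sum]
            refine Finset.sum_congr rfl fun a _ => Finset.sum_congr rfl fun b _ => ?_
            rw [hconj, ← AddChar.map_add_eq_mul]
            congr 1
            ring
        _ = ∑ a ∈ T, ∑ b ∈ T, ∑ s : F, ψ ((a - b) * s) := by
            rw [Finset.sum_comm]
            refine Finset.sum_congr rfl fun a _ => Finset.sum_comm
        _ = ∑ a ∈ T, ∑ b ∈ T, (if a - b = 0 then (q : ℂ) else 0) := by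
            refine Finset.sum_congr rfl fun a _ => Finset.sum_congr rfl fun b _ => ?_
            have : ∀ s : F, ψ ((a - b) * s) = ψ (s * (a - b)) := fun s => by rw [mul_comm]
            rw [Finset.sum_congr rfl fun s _ => this s, O]
        _ = (q : ℂ) * n := by
            have hrow : ∀ a ∈ T, (∑ b ∈ T, if a - b = 0 then (q : ℂ) else 0) = (q : ℂ) := by
              intro a ha
              rw [Finset.sum_eq_single a]
              · rw [if_pos (sub_self a)]
              · intro b _ hb
                rw [if_neg (fun h => hb (sub_eq_zero.mp h).symm)]
              · intro h; exact absurd ha h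
            rw [Finset.sum_congr rfl hrow, Finset.sum_const, hTcard, nsmul_eq_mul, mul_comm]
    exact_mod_cast hc
  have hSinv : ∀ s : F, ∀ a ∈ T, SS (s * a) = SS s := by
    intro s a ha
    have h1 : SS s = ∑ b ∈ T, ψ (s * (a * b)) := by
      simp only [hSSdef]
      conv_lhs => rw [← hTimg a ha]
      rw [Finset.sum_image (fun b _ c _ h => mul_left_cancel₀ (hT0 a ha) h)]
    rw [h1]
    simp only [hSSdef]
    refine Finset.sum_congr rfl fun b _ => ?_
    congr 1
    ring
  have hSbound : ∀ s : F, s ≠ 0 → ‖SS s‖ ≤ Real.sqrt q := by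
    intro s hs
    have h1 : (n : ℝ) * Complex.normSq (SS s) ≤ (q : ℝ) * n := by
      have h2 : ∑ a ∈ T.image (fun a => s * a), Complex.normSq (SS a)
          ≤ ∑ a : F, Complex.normSq (SS a) :=
        Finset.sum_le_sum_of_subset_of_nonneg (Finset.subset_univ _)
          (fun i _ _ => Complex.normSq_nonneg _)
      rw [Finset.sum_image (fun b _ c _ h => mul_left_cancel₀ hs h)] at h2
      have h3 : ∑ a ∈ T, Complex.normSq (SS (s * a)) = n * Complex.normSq (SS s) := by
        have he : ∀ a ∈ T, Complex.normSq (SS (s * a)) = Complex.normSq (SS s) :=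
          fun a ha => by rw [hSinv s a ha]
        rw [Finset.sum_congr rfl he, Finset.sum_const, hTcard, nsmul_eq_mul]
      rw [h3, hParsevalS] at h2
      exact h2
    have h4 : Complex.normSq (SS s) ≤ (q : ℝ) := by nlinarith [h1, hn0]
    rw [Complex.norm_def]
    exact Real.sqrt_le_sqrt h4
  -- Hc bounds
  have hsum_hh : ∑ u : F, hh u = 0 := by
    rw [hhdef]
    simp only
    rw [Finset.sum_sub_distrib, Finset.sum_const, Finset.card_univ]
    rw [Finset.sum_congr rfl fun u _ => hσ u]
    rw [Finset.sum_ite_mem, Finset.univ_inter, Finset.sum_const, hTcard, nsmul_eq_mul]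
    rw [← hqdef]
    field_simp
    simp
  have hH0 : Hc 0 = 0 := by
    rw [hHcdef]
    simp only [zero_mul, neg_zero, AddChar.map_zero_eq_one, mul_one]
    rw [← Complex.ofReal_sum, hsum_hh, Complex.ofReal_zero]
  have hHb : ∀ t : F, t ≠ 0 → ‖Hc t‖ ≤ (q : ℝ) / n * Real.sqrt q := by
    intro t ht
    have hsplit : Hc t = ((q : ℝ) / n : ℝ) * SS (-t) := by
      rw [hHcdef, hSSdef]
      simp only
      have e1 : ∀ u : F, ((hh u : ℝ) : ℂ) * ψ (-(t * u))
          = (if u ∈ T then ((q : ℝ) / n : ℂ) * ψ (-t * u) else 0) - ψ (u * (-t)) := by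
        intro u
        rw [hhdef]
        simp only
        rw [hσ u]
        by_cases hu : u ∈ T
        · rw [if_pos hu, if_pos hu]
          push_cast
          have : (-(t * u)) = (-t) * u := by ring
          rw [this]
          have : (u * (-t)) = (-t) * u := by ring
          rw [this]
          ring
        · rw [if_neg hu, if_neg hu]
          push_cast
          have : (-(t * u)) = (u * (-t)) := by ring
          rw [this]
          ring
      rw [Finset.sum_congr rfl fun u _ => e1 u, Finset.sum_sub_distrib]
      rw [O (-t), if_neg (neg_ne_zero.2 ht)]
      rw [Finset.sum_ite_mem, Finset.univ_inter, Finset.mul_sum]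
      rw [sub_zero]
      push_cast
      rfl
    rw [hsplit, norm_mul]
    have h5 : ‖(((q : ℝ) / n : ℝ) : ℂ)‖ = (q : ℝ) / n := by
      rw [Complex.norm_real, Real.norm_of_nonneg (by positivity)]
    rw [h5]
    exact mul_le_mul_of_nonneg_left (hSbound (-t) (neg_ne_zero.2 ht)) (by positivity)
  -- Parseval for Fc and Gc
  have hParsevalF : ∑ t : F, Complex.normSq (Fc t) = (q : ℝ) * ∑ x : F, (f x) ^ 2 := by
    have hc : ((∑ t : F, Complex.normSq (Fc t) : ℝ) : ℂ)
        = (((q : ℝ) * ∑ x : F, (f x) ^ 2 : ℝ) : ℂ) := by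
      push_cast
      calc (∑ t : F, (Complex.normSq (Fc t) : ℂ))
          = ∑ t : F, Fc t * (starRingEnd ℂ) (Fc t) := by
            refine Finset.sum_congr rfl fun t _ => (Complex.mul_conj _).symm
        _ = ∑ t : F, ∑ x : F, ∑ y : F, ((f x * f y : ℝ) : ℂ) * ψ ((x - y) * t) := by
            refine Finset.sum_congr rfl fun t _ => ?_
            rw [hFcdef, map_sum, Finset.sum_mul_sum]
            refine Finset.sum_congr rfl fun x _ => Finset.sum_congr rfl fun y _ => ?_
            rw [map_mul (starRingEnd ℂ), hconj, Complex.conj_ofReal]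
            have h9 : ψ (t * x) * ψ (-(t * y)) = ψ ((x - y) * t) := by
              rw [← AddChar.map_add_eq_mul]; congr 1; ring
            push_cast
            rw [← h9]
            ring
        _ = ∑ x : F, ∑ y : F, ∑ t : F, ((f x * f y : ℝ) : ℂ) * ψ ((x - y) * t) := by
            rw [Finset.sum_comm]
            refine Finset.sum_congr rfl fun x _ => Finset.sum_comm
        _ = ∑ x : F, ∑ y : F, ((f x * f y : ℝ) : ℂ) * (if x - y = 0 then (q : ℂ) else 0) := by
            refine Finset.sum_congr rfl fun x _ => Finset.sum_congr rfl fun y _ => ?_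
            rw [← Finset.mul_sum]
            congr 1
            rw [Finset.sum_congr rfl (fun t _ => by rw [mul_comm]), O]
        _ = (q : ℂ) * ∑ x : F, ((f x : ℂ)) ^ 2 := by
            rw [Finset.mul_sum]
            refine Finset.sum_congr rfl fun x _ => ?_
            rw [Finset.sum_eq_single x]
            · rw [if_pos (sub_self x)]; push_cast; ring
            · intro y _ hy
              rw [if_neg (sub_ne_zero.2 (Ne.symm hy)), mul_zero]
            · intro h; exact absurd (Finset.mem_univ _) h
    exact_mod_cast hc
  have hParsevalG : ∑ t : F, Complex.normSq (Gc t) = (q : ℝ) * ∑ y : F, (g y) ^ 2 := by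
    have hc : ((∑ t : F, Complex.normSq (Gc t) : ℝ) : ℂ)
        = (((q : ℝ) * ∑ y : F, (g y) ^ 2 : ℝ) : ℂ) := by
      push_cast
      calc (∑ t : F, (Complex.normSq (Gc t) : ℂ))
          = ∑ t : F, Gc t * (starRingEnd ℂ) (Gc t) := by
            refine Finset.sum_congr rfl fun t _ => (Complex.mul_conj _).symm
        _ = ∑ t : F, ∑ x : F, ∑ y : F, ((g x * g y : ℝ) : ℂ) * ψ ((y - x) * t) := by
            refine Finset.sum_congr rfl fun t _ => ?_
            rw [hGcdef, map_sum, Finset.sum_mul_sum]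
            refine Finset.sum_congr rfl fun x _ => Finset.sum_congr rfl fun y _ => ?_
            rw [map_mul (starRingEnd ℂ), hconj, Complex.conj_ofReal, neg_neg]
            have h9 : ψ (-(t * x)) * ψ (t * y) = ψ ((y - x) * t) := by
              rw [← AddChar.map_add_eq_mul]; congr 1; ring
            push_cast
            rw [← h9]
            ring
        _ = ∑ x : F, ∑ y : F, ∑ t : F, ((g x * g y : ℝ) : ℂ) * ψ ((y - x) * t) := by
            rw [Finset.sum_comm]
            refine Finset.sum_congr rfl fun x _ => Finset.sum_comm
        _ = ∑ x : F, ∑ y : F, ((g x * g y : ℝ) : ℂ) * (if y - x = 0 then (q : ℂ) else 0) := by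
            refine Finset.sum_congr rfl fun x _ => Finset.sum_congr rfl fun y _ => ?_
            rw [← Finset.mul_sum]
            congr 1
            rw [Finset.sum_congr rfl (fun t _ => by rw [mul_comm]), O]
        _ = (q : ℂ) * ∑ x : F, ((g x : ℂ)) ^ 2 := by
            rw [Finset.mul_sum]
            refine Finset.sum_congr rfl fun x _ => ?_
            rw [Finset.sum_eq_single x]
            · rw [if_pos (sub_self x)]; push_cast; ring
            · intro y _ hy
              rw [if_neg (sub_ne_zero.2 hy), mul_zero]
            · intro h; exact absurd (Finset.mem_univ _) h
    exact_mod_cast hc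
  have hf2 : ∑ x : F, (f x) ^ 2 ≤ (q : ℝ) := by
    calc ∑ x : F, (f x) ^ 2 ≤ ∑ _x : F, (1 : ℝ) := by
          refine Finset.sum_le_sum fun x _ => ?_
          have hx := hf x
          rw [Set.mem_Icc] at hx
          exact (sq_le_one_iff_abs_le_one (f x)).2 (abs_le.2 ⟨hx.1, hx.2⟩)
      _ = (q : ℝ) := by simp [hqdef]
  have hg2 : ∑ y : F, (g y) ^ 2 ≤ (q : ℝ) := by
    calc ∑ y : F, (g y) ^ 2 ≤ ∑ _y : F, (1 : ℝ) := by
          refine Finset.sum_le_sum fun y _ => ?_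
          have hy := hg y
          rw [Set.mem_Icc] at hy
          exact (sq_le_one_iff_abs_le_one (g y)).2 (abs_le.2 ⟨hy.1, hy.2⟩)
      _ = (q : ℝ) := by simp [hqdef]
  -- Cauchy-Schwarz
  have hCS : ∑ t : F, ‖Fc t‖ * ‖Gc t‖ ≤ (q : ℝ) ^ 2 := by
    have h1 : (∑ t : F, ‖Fc t‖ * ‖Gc t‖) ^ 2
        ≤ (∑ t : F, ‖Fc t‖ ^ 2) * (∑ t : F, ‖Gc t‖ ^ 2) :=
      Finset.sum_mul_sq_le_sq_mul_sq univ _ _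
    have hF2 : ∑ t : F, ‖Fc t‖ ^ 2 ≤ (q : ℝ) ^ 2 := by
      have : ∑ t : F, ‖Fc t‖ ^ 2 = ∑ t : F, Complex.normSq (Fc t) := by
        refine Finset.sum_congr rfl fun t _ => ?_
        rw [Complex.sq_norm]
      rw [this, hParsevalF]
      calc (q : ℝ) * ∑ x : F, (f x) ^ 2 ≤ (q : ℝ) * (q : ℝ) :=
            mul_le_mul_of_nonneg_left hf2 (le_of_lt hq0)
        _ = (q : ℝ) ^ 2 := by ring
    have hG2 : ∑ t : F, ‖Gc t‖ ^ 2 ≤ (q : ℝ) ^ 2 := by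
      have : ∑ t : F, ‖Gc t‖ ^ 2 = ∑ t : F, Complex.normSq (Gc t) := by
        refine Finset.sum_congr rfl fun t _ => ?_
        rw [Complex.sq_norm]
      rw [this, hParsevalG]
      calc (q : ℝ) * ∑ y : F, (g y) ^ 2 ≤ (q : ℝ) * (q : ℝ) :=
            mul_le_mul_of_nonneg_left hg2 (le_of_lt hq0)
        _ = (q : ℝ) ^ 2 := by ring
    have h2 : (∑ t : F, ‖Fc t‖ * ‖Gc t‖) ^ 2 ≤ ((q : ℝ) ^ 2) ^ 2 := by
      calc (∑ t : F, ‖Fc t‖ * ‖Gc t‖) ^ 2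
          ≤ (∑ t : F, ‖Fc t‖ ^ 2) * (∑ t : F, ‖Gc t‖ ^ 2) := h1
        _ ≤ (q : ℝ) ^ 2 * (q : ℝ) ^ 2 := by
            refine mul_le_mul hF2 hG2 ?_ (by positivity)
            exact Finset.sum_nonneg fun t _ => by positivity
        _ = ((q : ℝ) ^ 2) ^ 2 := by ring
    have hnonneg : 0 ≤ ∑ t : F, ‖Fc t‖ * ‖Gc t‖ :=
      Finset.sum_nonneg fun t _ => mul_nonneg (norm_nonneg _) (norm_nonneg _)
    have h3 := Real.sqrt_le_sqrt h2
    rw [Real.sqrt_sq hnonneg, Real.sqrt_sq (by positivity : (0:ℝ) ≤ (q:ℝ)^2)] at h3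
    exact h3
  -- put it together
  have hDbound : |D| ≤ Real.sqrt q * (q : ℝ) ^ 2 / n := by
    have h1 : (q : ℝ) * |D| = ‖(q : ℂ) * (D : ℂ)‖ := by
      rw [norm_mul, Complex.norm_natCast, Complex.norm_real, Real.norm_eq_abs]
    have h2 : ‖∑ t : F, Fc t * Gc t * Hc t‖
        ≤ ∑ t : F, ‖Fc t‖ * ‖Gc t‖ * ‖Hc t‖ := by
      refine le_trans (norm_sum_le _ _) (Finset.sum_le_sum fun t _ => ?_)
      rw [norm_mul, norm_mul]
    have h3 : ∑ t : F, ‖Fc t‖ * ‖Gc t‖ * ‖Hc t‖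
        ≤ ∑ t : F, ‖Fc t‖ * ‖Gc t‖ * ((q : ℝ) / n * Real.sqrt q) := by
      refine Finset.sum_le_sum fun t _ => ?_
      by_cases ht : t = 0
      · rw [ht, hH0, norm_zero, mul_zero]
        positivity
      · exact mul_le_mul_of_nonneg_left (hHb t ht)
          (mul_nonneg (norm_nonneg _) (norm_nonneg _))
    have h4 : ∑ t : F, ‖Fc t‖ * ‖Gc t‖ * ((q : ℝ) / n * Real.sqrt q)
        ≤ (q : ℝ) ^ 2 * ((q : ℝ) / n * Real.sqrt q) := by
      rw [← Finset.sum_mul]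
      exact mul_le_mul_of_nonneg_right hCS (by positivity)
    have h5 : (q : ℝ) * |D| ≤ (q : ℝ) ^ 2 * ((q : ℝ) / n * Real.sqrt q) := by
      rw [h1, ← hmain]
      exact le_trans h2 (le_trans h3 h4)
    have h6 : (q : ℝ) * |D| ≤ (q : ℝ) * (Real.sqrt q * (q : ℝ) ^ 2 / n) := by
      calc (q : ℝ) * |D| ≤ (q : ℝ) ^ 2 * ((q : ℝ) / n * Real.sqrt q) := h5
        _ = (q : ℝ) * (Real.sqrt q * (q : ℝ) ^ 2 / n) := by ring
    exact le_of_mul_le_mul_left h6 hq0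
  -- finish
  rw [hgoal, one_mul]
  have hrpow : (q : ℝ) ^ ((1 : ℝ) / 2) = Real.sqrt q := by
    rw [Real.sqrt_eq_rpow]
  rw [hrpow]
  rw [abs_div, abs_of_pos (by positivity : (0:ℝ) < (q:ℝ)^2), div_le_div_iff₀ (by positivity) hn0]
  calc |D| * n ≤ (Real.sqrt q * (q : ℝ) ^ 2 / n) * n := by
        exact mul_le_mul_of_nonneg_right hDbound (le_of_lt hn0)
    _ = Real.sqrt q * (q : ℝ) ^ 2 := by field_simp
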